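/- If r = (r_0, r_1) ∈ D_2^{(0)}, i.e., for every z ∈ ℤ² there exists k ∈ ℕ with τ_r^k(z) = (0,0), then every complex root of X² + r_1 X + r_0 has modulus strictly less than 1; equivalently, |r_0| < 1 and |r_1| < r_0 + 1. In other words, D_2^{(0)} ⊂ E_2. -/

import Mathlib

open Polynomial

/-- The shift radix system `τ_r : ℤ^d → ℤ^d`. -/
noncomputable def srsMap (d : ℕ) (r : Fin d → ℝ) (z : Fin d → ℤ) : Fin d → ℤ :=
  fun i =>
    if h : (i : ℕ) + 1 < d then z ⟨(i : ℕ) + 1, h⟩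
    else -⌊∑ j, r j * (z j : ℝ)⌋

lemma srs0 (r : Fin 2 → ℝ) (z : Fin 2 → ℤ) : srsMap 2 r z 0 = z 1 := by
  simp [srsMap]

lemma srs1 (r : Fin 2 → ℝ) (z : Fin 2 → ℤ) :
    srsMap 2 r z 1 = -⌊r 0 * (z 0 : ℝ) + r 1 * (z 1 : ℝ)⌋ := by
  simp [srsMap, Fin.sum_univ_two]

/-- The orbit of `z` under `τ_r`, read off coordinatewise as a sequence. -/
noncomputable def orb (r : Fin 2 → ℝ) (z : Fin 2 → ℤ) (n : ℕ) : ℤ :=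
  ((srsMap 2 r)^[n] z) 0

lemma orb_one (r : Fin 2 → ℝ) (z : Fin 2 → ℤ) (n : ℕ) :
    ((srsMap 2 r)^[n] z) 1 = orb r z (n+1) := by
  rw [orb, Function.iterate_succ_apply', srs0]

lemma orb_rec (r : Fin 2 → ℝ) (z : Fin 2 → ℤ) (n : ℕ) :
    orb r z (n+2) = -⌊r 0 * (orb r z n : ℝ) + r 1 * (orb r z (n+1) : ℝ)⌋ := by
  have h1 : orb r z (n+2) = ((srsMap 2 r)^[n+1] z) 1 := (orb_one r z (n+1)).symm
  rw [h1, Function.iterate_succ_apply', srs1, ← orb, orb_one]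

/-- If `|r 0| ≥ 1` then `τ_r z = 0 → z = 0`, which contradicts finiteness. -/
lemma abs_r0_lt_one (r : Fin 2 → ℝ)
    (hfin : ∀ z : Fin 2 → ℤ, ∃ k : ℕ, (srsMap 2 r)^[k] z = 0) : |r 0| < 1 := by
  by_contra h
  push_neg at h
  have key : ∀ z : Fin 2 → ℤ, srsMap 2 r z = 0 → z = 0 := by
    intro z hz
    have h1 : z 1 = 0 := by have := congrFun hz 0; rwa [srs0] at this
    have h2 : (-⌊r 0 * (z 0 : ℝ) + r 1 * (z 1 : ℝ)⌋ : ℤ) = 0 := by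
      have := congrFun hz 1; rwa [srs1] at this
    rw [h1] at h2
    simp only [Int.cast_zero, mul_zero, add_zero, neg_eq_zero] at h2
    have hlo : (0:ℝ) ≤ r 0 * z 0 := by
      have := Int.floor_le (α := ℝ) (r 0 * z 0); rw [h2] at this; simpa using this
    have hhi : r 0 * z 0 < 1 := by
      have := Int.lt_floor_add_one (R := ℝ) (r 0 * z 0); rw [h2] at this; simpa using this
    have h0 : z 0 = 0 := by
      by_contra hz0
      have hc : (1:ℝ) ≤ (z 0 : ℝ) ∨ (z 0 : ℝ) ≤ -1 := by
        rcases lt_or_gt_of_ne hz0 with h' | h'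
        · right; exact_mod_cast (show z 0 ≤ -1 by omega)
        · left; exact_mod_cast (show (1:ℤ) ≤ z 0 by omega)
      rcases le_abs.mp h with hr | hr <;> rcases hc with hz | hz <;> nlinarith
    funext i
    fin_cases i <;> simp [h0, h1]
  have iter : ∀ k : ℕ, ∀ z : Fin 2 → ℤ, (srsMap 2 r)^[k] z = 0 → z = 0 := by
    intro k
    induction k with
    | zero => intro z hz; simpa using hz
    | succ n ih =>
      intro z hz
      rw [Function.iterate_succ_apply] at hz
      exact key z (ih _ hz)
  obtain ⟨k, hk⟩ := hfin ![1, 0]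
  have h0 := iter k _ hk
  have h10 : (![1,0] : Fin 2 → ℤ) 0 = 1 := rfl
  rw [h0] at h10
  simp at h10

/-- A sequence satisfying the lower recurrence bound with `r0 + 1 ≤ r1` stays `≥ 1`. -/
lemma pos_orbit (r0 r1 : ℝ) (h0 : -1 < r0) (hr1 : r0 + 1 ≤ r1) (s : ℕ → ℤ)
    (hs0 : s 0 = 1) (hs1 : s 1 = 1)
    (hrec : ∀ n, r1 * (s (n+1):ℝ) - r0 * (s n:ℝ) - 1 < (s (n+2):ℝ)) :
    ∀ n, 1 ≤ s n := by
  have Q : ∀ n, 1 ≤ s n ∧ 1 ≤ s (n+1) ∧ (0 ≤ r0 → s n ≤ s (n+1)) := by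
    intro n; induction n with
    | zero => rw [hs0, hs1]; exact ⟨le_refl 1, le_refl 1, fun _ => le_refl 1⟩
    | succ m ih =>
      obtain ⟨ha, hb, hab⟩ := ih
      have ha' : (1:ℝ) ≤ (s m : ℝ) := by exact_mod_cast ha
      have hb' : (1:ℝ) ≤ (s (m+1) : ℝ) := by exact_mod_cast hb
      have hc := hrec m
      have hc' : (r0+1) * (s (m+1):ℝ) - r0 * (s m:ℝ) - 1 < (s (m+2):ℝ) := by
        nlinarith
      refine ⟨hb, ?_, ?_⟩
      · show 1 ≤ s (m+2)
        rcases le_or_gt 0 r0 with hpos | hneg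
        · have hab' : (s m:ℝ) ≤ (s (m+1):ℝ) := by exact_mod_cast hab hpos
          have hlt : (s (m+1):ℝ) < (s (m+2):ℝ) + 1 := by nlinarith
          have : s (m+1) < s (m+2) + 1 := by exact_mod_cast hlt
          omega
        · have hpos2 : (0:ℝ) < (s (m+2):ℝ) := by
            nlinarith [mul_nonneg (by linarith : (0:ℝ) ≤ r0 + 1) (by linarith : (0:ℝ) ≤ (s (m+1):ℝ) - 1),
              mul_nonneg (by linarith : (0:ℝ) ≤ -r0) (by linarith : (0:ℝ) ≤ (s m:ℝ) - 1)]
          have : (0:ℤ) < s (m+2) := by exact_mod_cast hpos2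
          omega
      · show 0 ≤ r0 → s (m+1) ≤ s (m+2)
        intro hpos
        have hab' : (s m:ℝ) ≤ (s (m+1):ℝ) := by exact_mod_cast hab hpos
        have hlt : (s (m+1):ℝ) < (s (m+2):ℝ) + 1 := by nlinarith
        have : s (m+1) < s (m+2) + 1 := by exact_mod_cast hlt
        omega
  exact fun n => (Q n).1

lemma abs_r1_lt (r : Fin 2 → ℝ)
    (hfin : ∀ z : Fin 2 → ℤ, ∃ k : ℕ, (srsMap 2 r)^[k] z = 0)
    (h0 : |r 0| < 1) : |r 1| < r 0 + 1 := by
  obtain ⟨h0a, h0b⟩ := abs_lt.mp h0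
  by_contra h
  push_neg at h
  rcases le_abs.mp h with hr | hr
  · -- r 0 + 1 ≤ r 1 : alternating orbit from (1, -1)
    set g := orb r ![1, -1] with hg
    set s : ℕ → ℤ := fun n => (-1)^n * g n with hs
    have hs0 : s 0 = 1 := by simp [hs, hg, orb]
    have hs1 : s 1 = 1 := by
      have : g 1 = -1 := by
        rw [hg, orb, Function.iterate_one, srs0]; rfl
      simp [hs, this]
    have hrec : ∀ n, r 1 * (s (n+1):ℝ) - r 0 * (s n:ℝ) - 1 < (s (n+2):ℝ) := by
      intro n
      set x := r 0 * (g n : ℝ) + r 1 * (g (n+1) : ℝ) with hx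
      have hfl : ((⌊x⌋:ℤ):ℝ) ≤ x := Int.floor_le x
      have hfu : x < ((⌊x⌋:ℤ):ℝ) + 1 := Int.lt_floor_add_one x
      have hrec2 : (g (n+2) : ℝ) = -((⌊x⌋:ℤ):ℝ) := by
        exact_mod_cast congrArg (fun t : ℤ => (t:ℝ)) (orb_rec r ![1,-1] n)
      rcases Nat.even_or_odd n with he | ho
      · have e0 : ((-1:ℤ)^n) = 1 := he.neg_one_pow
        have e1 : ((-1:ℤ)^(n+1)) = -1 := by rw [pow_succ, e0]; ring
        have e2 : ((-1:ℤ)^(n+2)) = 1 := by rw [pow_succ, e1]; ring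
        simp only [hs, e0, e1, e2]
        push_cast
        rw [hx] at hfl
        linarith [hrec2]
      · have e0 : ((-1:ℤ)^n) = -1 := ho.neg_one_pow
        have e1 : ((-1:ℤ)^(n+1)) = 1 := by rw [pow_succ, e0]; ring
        have e2 : ((-1:ℤ)^(n+2)) = -1 := by rw [pow_succ, e1]; ring
        simp only [hs, e0, e1, e2]
        push_cast
        rw [hx] at hfu
        linarith [hrec2]
    have hpos := pos_orbit (r 0) (r 1) h0a hr s hs0 hs1 hrec
    obtain ⟨k, hk⟩ := hfin ![1, -1]
    have hgk : g k = 0 := by rw [hg, orb, hk]; rfl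
    have := hpos k
    rw [hs] at this
    simp only [hgk, mul_zero] at this
    omega
  · -- r 0 + 1 ≤ -(r 1) : positive orbit from (1, 1)
    set g := orb r ![1, 1] with hg
    have hs0 : g 0 = 1 := by simp [hg, orb]
    have hs1 : g 1 = 1 := by rw [hg, orb, Function.iterate_one, srs0]; rfl
    have hrec : ∀ n, (-(r 1)) * (g (n+1):ℝ) - r 0 * (g n:ℝ) - 1 < (g (n+2):ℝ) := by
      intro n
      set x := r 0 * (g n : ℝ) + r 1 * (g (n+1) : ℝ) with hx
      have hfl : ((⌊x⌋:ℤ):ℝ) ≤ x := Int.floor_le x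
      have hrec2 : (g (n+2) : ℝ) = -((⌊x⌋:ℤ):ℝ) := by
        exact_mod_cast congrArg (fun t : ℤ => (t:ℝ)) (orb_rec r ![1,1] n)
      rw [hx] at hfl
      linarith [hrec2]
    have hpos := pos_orbit (r 0) (-(r 1)) h0a hr g hs0 hs1 hrec
    obtain ⟨k, hk⟩ := hfin ![1, 1]
    have hgk : g k = 0 := by rw [hg, orb, hk]; rfl
    have := hpos k
    omega

lemma real_root_bound (r0 r1 x : ℝ) (h0 : |r0| < 1) (h1 : |r1| < r0 + 1)
    (hx : x^2 + r1*x + r0 = 0) : |x| < 1 := by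
  obtain ⟨h0a, h0b⟩ := abs_lt.mp h0
  obtain ⟨h1a, h1b⟩ := abs_lt.mp h1
  rw [abs_lt]
  constructor
  · by_contra hle; push_neg at hle
    have hxle : x ≤ -1 := by linarith
    nlinarith [mul_nonneg (by linarith : (0:ℝ) ≤ -(x+1)) (by linarith : (0:ℝ) ≤ -(x + r0)),
      mul_pos (by linarith : (0:ℝ) < -x) (by linarith : (0:ℝ) < 1 - r1 + r0)]
  · by_contra hle; push_neg at hle
    nlinarith [mul_nonneg (by linarith : (0:ℝ) ≤ x - 1) (by linarith : (0:ℝ) ≤ x - r0),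
      mul_pos (by linarith : (0:ℝ) < x) (by linarith : (0:ℝ) < 1 + r1 + r0)]

lemma complex_root_bound (r0 r1 : ℝ) (h0 : |r0| < 1) (h1 : |r1| < r0 + 1)
    (μ : ℂ) (h : μ^2 + (r1:ℂ)*μ + (r0:ℂ) = 0) : ‖μ‖ < 1 := by
  by_cases hc : (starRingEnd ℂ) μ = μ
  · have hμ : ((μ.re : ℂ)) = μ := Complex.conj_eq_iff_re.mp hc
    set x := μ.re
    have hx : x^2 + r1*x + r0 = 0 := by
      have h' : ((x^2 + r1*x + r0 : ℝ) : ℂ) = 0 := by push_cast; rw [hμ]; exact h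
      exact_mod_cast h'
    have := real_root_bound r0 r1 x h0 h1 hx
    rw [← hμ, Complex.norm_real, Real.norm_eq_abs]; exact this
  · have hconj : ((starRingEnd ℂ) μ)^2 + (r1:ℂ) * (starRingEnd ℂ) μ + (r0:ℂ) = 0 := by
      have := congrArg (starRingEnd ℂ) h
      simpa [map_add, map_mul, map_pow, Complex.conj_ofReal] using this
    have hdiff : (μ - (starRingEnd ℂ) μ) * (μ + (starRingEnd ℂ) μ + r1) = 0 := by
      linear_combination h - hconj
    have hμc : μ + (starRingEnd ℂ) μ + r1 = 0 := by
      rcases mul_eq_zero.mp hdiff with h' | h'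
      · exact absurd (sub_eq_zero.mp h').symm hc
      · exact h'
    have hprod : μ * (starRingEnd ℂ) μ = r0 := by linear_combination μ * hμc - h
    have hsq : (‖μ‖)^2 = r0 := by
      have hmc := Complex.mul_conj μ
      rw [hprod] at hmc
      have hns : Complex.normSq μ = r0 := by exact_mod_cast hmc.symm
      rw [← hns, Complex.sq_norm]
    nlinarith [norm_nonneg μ, abs_lt.mp h0]

/-- `D_2^{(0)} ⊂ E_2`: if `τ_r` has the finiteness property then every
complex root of `X² + r_1 X + r_0` has modulus `< 1`; equivalently `|r_0| < 1` and
`|r_1| < r_0 + 1`. -/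
theorem D2_zero_subset_E2 (r : Fin 2 → ℝ)
    (hfin : ∀ z : Fin 2 → ℤ, ∃ k : ℕ, (srsMap 2 r)^[k] z = 0) :
    (∀ μ : ℂ, μ ^ 2 + (r 1 : ℂ) * μ + (r 0 : ℂ) = 0 → ‖μ‖ < 1)
    ∧ |r 0| < 1 ∧ |r 1| < r 0 + 1 := by
  have h0 := abs_r0_lt_one r hfin
  have h1 := abs_r1_lt r hfin h0
  exact ⟨fun μ hμ => complex_root_bound (r 0) (r 1) h0 h1 μ hμ, h0, h1⟩
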